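/- Assume that (H, G₁) satisfies Condition A with constant ζ and Condition B with constant ζ for some integer ζ ≥ 1. Then G = P ∪ P⁻¹ ∪ G₁: every element of G is (H, G₁)-positive, or (H, G₁)-negative, or belongs to G₁. -/

import Mathlib

namespace GarsideOrder

variable {G : Type*} [Group G]

/-- `a ≤_R b` iff `b * a⁻¹ ∈ M`. -/
def leR (M : Submonoid G) (a b : G) : Prop := b * a⁻¹ ∈ M

/-- `a ≤_L b` iff `a⁻¹ * b ∈ M`. -/
def leL (M : Submonoid G) (a b : G) : Prop := a⁻¹ * b ∈ M

/-- Right divisors (in `M`) of `a`. -/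
def DivR (M : Submonoid G) (a : G) : Set G := {b : G | b ∈ M ∧ leR M b a}

/-- Left divisors (in `M`) of `a`. -/
def DivL (M : Submonoid G) (a : G) : Set G := {b : G | b ∈ M ∧ leL M b a}

/-- `a` is balanced if its sets of right and left divisors coincide. -/
def Balanced (M : Submonoid G) (a : G) : Prop := DivR M a = DivL M a

open Classical in
/-- The `N`-tail of `a`: the unique `b ∈ N` having the same right divisors lying in `N`
as `a` (w.r.t. the divisibility of the ambient monoid `M`). -/
noncomputable def tail (M N : Submonoid G) (a : G) : G :=
  if h : ∃ b : G, b ∈ N ∧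
      {c : G | c ∈ N ∧ leR M c a} = {c : G | c ∈ N ∧ leR M c b} then
    h.choose
  else 1

/-- Iterated stripping of alternating tails: first the `M₁`-tail, then the `N`-tail, etc. -/
noncomputable def strip (M M₁ N : Submonoid G) : ℕ → G → G
  | 0, a => a
  | i + 1, a =>
      strip M M₁ N i a *
        (tail M (if i % 2 = 0 then M₁ else N) (strip M M₁ N i a))⁻¹

/-- The breadth of `a`: the length of the alternating form of `a`, i.e. the least `p ≥ 1`
such that stripping alternating tails `p` times reaches `1`. -/
noncomputable def bh (M M₁ N : Submonoid G) (a : G) : ℕ :=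
  sInf {p : ℕ | 1 ≤ p ∧ strip M M₁ N p a = 1}

/-- The depth of `a`: `(bh a - 1)/2` if `bh a` is odd, `bh a / 2` if `bh a` is even;
in both cases this is `bh a / 2` with natural division. -/
noncomputable def dpt (M M₁ N : Submonoid G) (a : G) : ℕ := bh M M₁ N a / 2

/-- `a ∈ M` is unmovable if `Δ` does not right-divide it. -/
def Unmovable (M : Submonoid G) (Δ a : G) : Prop := a ∈ M ∧ ¬ leR M Δ a

/-- `α` is `(H, G₁)`-negative: its `Δ`-form is `a Δ^{-k}` with `k ≥ 1` and
`dpt a < dpt (Δ^k)`. -/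
def Negative (M M₁ N : Submonoid G) (Δ : G) (α : G) : Prop :=
  ∃ a : G, ∃ k : ℕ, Unmovable M Δ a ∧ 1 ≤ k ∧ α = a * (Δ ^ k)⁻¹ ∧
    dpt M M₁ N a < dpt M M₁ N (Δ ^ k)

/-- `α` is `(H, G₁)`-positive if `α⁻¹` is `(H, G₁)`-negative. -/
def Positive (M M₁ N : Submonoid G) (Δ : G) (α : G) : Prop :=
  Negative M M₁ N Δ α⁻¹

/-- The set `Θ` of theta elements `θ^k a₀`, `k ≥ 1`, `a₀ ∈ M₁`. -/
def thetaSet (M₁ : Submonoid G) (θ : G) : Set G :=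
  {x : G | ∃ k : ℕ, 1 ≤ k ∧ ∃ a₀ ∈ M₁, x = θ ^ k * a₀}

/-- `Θ̄ = Θ ∪ M₁`. -/
def thetaBar (M₁ : Submonoid G) (θ : G) : Set G := thetaSet M₁ θ ∪ (M₁ : Set G)

/-- Condition A with constant `ζ`: `dpt (Δ^k) = ζ k + 1` for all `k ≥ 1`. -/
def CondA (M M₁ N : Submonoid G) (Δ : G) (ζ : ℕ) : Prop :=
  ∀ k : ℕ, 1 ≤ k → dpt M M₁ N (Δ ^ k) = ζ * k + 1

/-- Condition B with constant `ζ`. -/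
def CondB (M M₁ N : Submonoid G) (Δ θ : G) (ζ : ℕ) : Prop :=
  ∀ a b c : G, ∀ t : ℤ,
    Unmovable M Δ a → Unmovable M Δ b →
    ¬(a ∈ thetaBar M₁ θ ∧ b ∈ thetaBar M₁ θ) →
    Unmovable M Δ c → a * b = c * Δ ^ t →
    ∃ ε : ℕ, ε ≤ 1 ∧
      (dpt M M₁ N c : ℤ) =
        (dpt M M₁ N a : ℤ) + (dpt M M₁ N b : ℤ) - (ζ : ℤ) * t - (ε : ℤ) ∧
      ((a ∈ thetaSet M₁ θ ∨ b ∈ thetaSet M₁ θ ∨ c ∈ M₁) → ε = 1)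

/-- A Garside structure with group of fractions the subgroup `car`. -/
structure IsGarsideOn (car : Subgroup G) (M : Submonoid G) (Δ : G) : Prop where
  M_sub : (M : Set G) ⊆ (car : Set G)
  delta_mem : Δ ∈ M
  units_trivial : ∀ x : G, x ∈ M → x⁻¹ ∈ M → x = 1
  noetherian : ∀ a ∈ M, ∃ n : ℕ, 1 ≤ n ∧ ∀ l : List G,
      (∀ x ∈ l, x ∈ M ∧ x ≠ 1) → l.prod = a → l.length ≤ n
  balanced : Balanced M Δ
  div_finite : (DivR M Δ).Finite
  div_gen_monoid : Submonoid.closure (DivR M Δ) = M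
  div_gen_group : Subgroup.closure (DivR M Δ) = car
  meet : ∀ a ∈ car, ∀ b ∈ car, ∃ c ∈ car, leR M c a ∧ leR M c b ∧
      ∀ d ∈ car, leR M d a → leR M d b → leR M d c
  join : ∀ a ∈ car, ∀ b ∈ car, ∃ c ∈ car, leR M a c ∧ leR M b c ∧
      ∀ d ∈ car, leR M a d → leR M b d → leR M c d

/-- The parabolic submonoid determined by `δ`: the submonoid generated by `Div(δ)`. -/
def parM (M : Submonoid G) (δ : G) : Submonoid G := Submonoid.closure (DivR M δ)

/-- The parabolic subgroup determined by `δ`: the subgroup generated by `Div(δ)`. -/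
def parG (M : Submonoid G) (δ : G) : Subgroup G := Subgroup.closure (DivR M δ)

/-- `δ` determines a parabolic substructure of `(G, M, Δ)`. -/
structure IsParabolic (M : Submonoid G) (Δ δ : G) : Prop where
  mem : δ ∈ M
  balanced : Balanced M δ
  div_eq : DivR M δ = DivR M Δ ∩ (parM M δ : Set G)

/-- The setting of Section 3: a Garside structure `(car, M, Δ)` together with two
parabolic substructures `(H, N, Λ)` (given by `lam`) and `(G₁, M₁, Δ₁)` (given by `δ1`),
with `N ≠ M`, `M₁ ≠ M`, `N ∪ M₁` generating `M`, `Δ` central, `Δ₁` central in `G₁`. -/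
structure Setting (G : Type*) [Group G] where
  car : Subgroup G
  M : Submonoid G
  Δ : G
  δ1 : G
  lam : G
  garside : IsGarsideOn car M Δ
  par1 : IsParabolic M Δ δ1
  parH : IsParabolic M Δ lam
  N_ne : parM M lam ≠ M
  M1_ne : parM M δ1 ≠ M
  unionGen : Submonoid.closure ((parM M lam : Set G) ∪ (parM M δ1 : Set G)) = M
  delta_central : ∀ g ∈ car, Δ * g = g * Δ
  delta1_central : ∀ g ∈ parG M δ1, δ1 * g = g * δ1

namespace Setting

variable (S : Setting G)

/-- The parabolic submonoid `M₁`. -/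
def M₁ : Submonoid G := parM S.M S.δ1

/-- The parabolic submonoid `N`. -/
def Nsub : Submonoid G := parM S.M S.lam

/-- The parabolic subgroup `G₁`. -/
def G₁ : Subgroup G := parG S.M S.δ1

/-- `θ = Δ Δ₁⁻¹`. -/
def theta : G := S.Δ * S.δ1⁻¹

/-- The set of `(H, G₁)`-negative elements. -/
def Neg : Set G := {α : G | Negative S.M S.M₁ S.Nsub S.Δ α}

/-- The set of `(H, G₁)`-positive elements. -/
def Pos : Set G := {α : G | α⁻¹ ∈ S.Neg}

/-- Condition A. -/
def condA (ζ : ℕ) : Prop := CondA S.M S.M₁ S.Nsub S.Δ ζ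

/-- Condition B. -/
def condB (ζ : ℕ) : Prop := CondB S.M S.M₁ S.Nsub S.Δ S.theta ζ

/-- `(H, G₁)` is a Dehornoy structure: `PP ⊆ P`, `G₁ P G₁ ⊆ P`, and the group is the
disjoint union of `P`, `P⁻¹` and `G₁`. -/
def IsDehornoy : Prop :=
  (∀ α ∈ S.Pos, ∀ β ∈ S.Pos, α * β ∈ S.Pos) ∧
  (∀ g₁ ∈ S.G₁, ∀ α ∈ S.Pos, ∀ g₂ ∈ S.G₁, g₁ * α * g₂ ∈ S.Pos) ∧
  (∀ α ∈ S.car, α ∈ S.Pos ∨ α ∈ S.Neg ∨ α ∈ S.G₁) ∧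
  (∀ α : G, ¬(α ∈ S.Pos ∧ α ∈ S.Neg)) ∧
  (∀ α : G, ¬(α ∈ S.Pos ∧ α ∈ S.G₁)) ∧
  (∀ α : G, ¬(α ∈ S.Neg ∧ α ∈ S.G₁))

end Setting

end GarsideOrder


namespace GarsideOrder

variable {G : Type*} [Group G]

section Basic

theorem leR_refl (M : Submonoid G) (a : G) : leR M a a := by
  simpa [leR] using M.one_mem

theorem leR_trans {M : Submonoid G} {a b c : G} (h1 : leR M a b) (h2 : leR M b c) :
    leR M a c := by
  have h := M.mul_mem h2 h1
  have e : c * b⁻¹ * (b * a⁻¹) = c * a⁻¹ := by group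
  rwa [e] at h

theorem leR_mul_right {M : Submonoid G} {a b : G} (g : G) (h : leR M a b) :
    leR M (a * g) (b * g) := by
  have e : b * g * (a * g)⁻¹ = b * a⁻¹ := by group
  unfold leR
  rwa [e]

theorem leR_of_mul_right {M : Submonoid G} {a b : G} (g : G) (h : leR M (a * g) (b * g)) :
    leR M a b := by
  have e : b * g * (a * g)⁻¹ = b * a⁻¹ := by group
  unfold leR at h
  rwa [e] at h

theorem mem_of_leR {M : Submonoid G} {a b : G} (hb : b ∈ M) (h : leR M b a) : a ∈ M := by
  have := M.mul_mem h hb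
  have e : a * b⁻¹ * b = a := by group
  rwa [e] at this

theorem leR_one_iff {M : Submonoid G} {a : G} : leR M 1 a ↔ a ∈ M := by
  simp [leR]

theorem leR_one_right {M : Submonoid G} {a : G} (h : leR M a 1) : a⁻¹ ∈ M := by
  simpa [leR] using h

end Basic

namespace Setting

variable (S : Setting G)

theorem units_eq_one {a : G} (h1 : a ∈ S.M) (h2 : a⁻¹ ∈ S.M) : a = 1 :=
  S.garside.units_trivial a h1 h2

theorem leR_antisymm {a b : G} (h1 : leR S.M a b) (h2 : leR S.M b a) : a = b := by
  have h3 : (a * b⁻¹)⁻¹ ∈ S.M := by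
    have e : (a * b⁻¹)⁻¹ = b * a⁻¹ := by group
    rwa [e]
  have := S.units_eq_one h2 h3
  have e : a = (a * b⁻¹) * b := by group
  rw [e, this, one_mul]

theorem delta_mem : S.Δ ∈ S.M := S.garside.delta_mem

theorem dcen (hcar : S.car = ⊤) (g : G) : S.Δ * g = g * S.Δ :=
  S.delta_central g (by rw [hcar]; exact Subgroup.mem_top g)

theorem dcomm (hcar : S.car = ⊤) (g : G) : Commute S.Δ g := S.dcen hcar g

/-- δ1 is a right divisor of Δ. -/
theorem delta1_mem_DivDelta : S.δ1 ∈ DivR S.M S.Δ := by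
  have h1 : S.δ1 ∈ DivR S.M S.δ1 := ⟨S.par1.mem, leR_refl _ _⟩
  have := S.par1.div_eq ▸ h1
  exact this.1

theorem theta_mem : S.theta ∈ S.M := S.delta1_mem_DivDelta.2

theorem lam_mem_DivDelta : S.lam ∈ DivR S.M S.Δ := by
  have h1 : S.lam ∈ DivR S.M S.lam := ⟨S.parH.mem, leR_refl _ _⟩
  have := S.parH.div_eq ▸ h1
  exact this.1

theorem delta_ne_one : S.Δ ≠ 1 := by
  intro hΔ
  apply S.N_ne
  have hDiv : ∀ b ∈ DivR S.M S.Δ, b = 1 := by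
    intro b hb
    apply S.units_eq_one hb.1
    have := hb.2
    rw [hΔ] at this
    simpa [leR] using this
  have hM : ∀ x ∈ S.M, x = 1 := by
    intro x hx
    rw [← S.garside.div_gen_monoid] at hx
    have h1 : DivR S.M S.Δ ⊆ ((⊥ : Submonoid G) : Set G) := by
      intro b hb; simp [hDiv b hb]
    have := Submonoid.closure_le.2 h1 hx
    simpa using this
  have h2 : parM S.M S.lam ≤ S.M := by
    apply Submonoid.closure_le.2
    intro b hb; exact hb.1
  ext x
  constructor
  · intro hx; exact h2 hx
  · intro hx; rw [hM x hx]; exact (parM S.M S.lam).one_mem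

theorem one_unmovable : Unmovable S.M S.Δ 1 := by
  refine ⟨S.M.one_mem, fun h => ?_⟩
  exact S.delta_ne_one (S.units_eq_one S.delta_mem (leR_one_right h))

end Setting

end GarsideOrder

namespace GarsideOrder

variable {G : Type*} [Group G]

namespace Setting

variable (S : Setting G)

/-- `j` is the right-lcm (join) of `x` and `y`. -/
def IsJoin (x y j : G) : Prop :=
  leR S.M x j ∧ leR S.M y j ∧ ∀ d : G, leR S.M x d → leR S.M y d → leR S.M j d

theorem isJoin_unique {x y j j' : G} (h : S.IsJoin x y j) (h' : S.IsJoin x y j') : j = j' :=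
  S.leR_antisymm (h.2.2 j' h'.1 h'.2.1) (h'.2.2 j h.1 h.2.1)

theorem exists_isJoin (hcar : S.car = ⊤) (x y : G) : ∃ j : G, S.IsJoin x y j := by
  have hx : x ∈ S.car := by rw [hcar]; exact Subgroup.mem_top x
  have hy : y ∈ S.car := by rw [hcar]; exact Subgroup.mem_top y
  obtain ⟨c, _, h1, h2, h3⟩ := S.garside.join x hx y hy
  exact ⟨c, h1, h2, fun d hdx hdy => h3 d (by rw [hcar]; exact Subgroup.mem_top d) hdx hdy⟩

open Classical in
noncomputable def joinE (hcar : S.car = ⊤) (x y : G) : G := (S.exists_isJoin hcar x y).choose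

theorem joinE_isJoin (hcar : S.car = ⊤) (x y : G) : S.IsJoin x y (S.joinE hcar x y) :=
  (S.exists_isJoin hcar x y).choose_spec

theorem isJoin_mul_right {x y j : G} (g : G) (h : S.IsJoin x y j) :
    S.IsJoin (x * g) (y * g) (j * g) := by
  refine ⟨leR_mul_right g h.1, leR_mul_right g h.2.1, fun d hdx hdy => ?_⟩
  have h1 : leR S.M x (d * g⁻¹) := by
    have := leR_mul_right g⁻¹ hdx
    rwa [mul_assoc, mul_inv_cancel, mul_one] at this
  have h2 : leR S.M y (d * g⁻¹) := by
    have := leR_mul_right g⁻¹ hdy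
    rwa [mul_assoc, mul_inv_cancel, mul_one] at this
  have := leR_mul_right g (h.2.2 _ h1 h2)
  rwa [mul_assoc, inv_mul_cancel, mul_one] at this

theorem isJoin_comm {x y j : G} (h : S.IsJoin x y j) : S.IsJoin y x j :=
  ⟨h.2.1, h.1, fun d h1 h2 => h.2.2 d h2 h1⟩

theorem isJoin_one_right {x : G} (hx : x ∈ S.M) : S.IsJoin x 1 x :=
  ⟨leR_refl _ _, leR_one_iff.2 hx, fun _ h1 _ => h1⟩

theorem isJoin_one_left {x : G} (hx : x ∈ S.M) : S.IsJoin 1 x x :=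
  S.isJoin_comm (S.isJoin_one_right hx)

/-- Absorption: if `s ≤ x` then a join of `x` and `u` where `u` is a join of `s,y`,
is a join of `x,y`. -/
theorem isJoin_absorb {s x y u j : G} (hs : leR S.M s x) (hu : S.IsJoin s y u)
    (hj : S.IsJoin x u j) : S.IsJoin x y j := by
  refine ⟨hj.1, leR_trans hu.2.1 hj.2.1, fun d hdx hdy => ?_⟩
  exact hj.2.2 d hdx (hu.2.2 d (leR_trans hs hdx) hdy)

end Setting

section Lists

theorem closure_exists_list {D : Set G} {x : G} (hx : x ∈ Submonoid.closure D) :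
    ∃ l : List G, (∀ s ∈ l, s ∈ D) ∧ l.prod = x := by
  induction hx using Submonoid.closure_induction with
  | mem y hy => exact ⟨[y], by simp [hy]⟩
  | one => exact ⟨[], by simp⟩
  | mul y z _ _ hy hz =>
      obtain ⟨l1, h1, e1⟩ := hy
      obtain ⟨l2, h2, e2⟩ := hz
      refine ⟨l1 ++ l2, ?_, by simp [e1, e2]⟩
      intro s hs
      rcases List.mem_append.1 hs with h | h
      · exact h1 s h
      · exact h2 s h

end Lists

namespace Setting

variable (S : Setting G)

/-- Lengths of factorizations of `x` into nontrivial elements of `M`. -/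
def fmSet (x : G) : Set ℕ :=
  {k | ∃ l : List G, (∀ s ∈ l, s ∈ S.M ∧ s ≠ 1) ∧ l.prod = x ∧ l.length = k}

noncomputable def fm (x : G) : ℕ := sSup (S.fmSet x)

theorem fmSet_nonempty {x : G} (hx : x ∈ S.M) : (S.fmSet x).Nonempty := by
  by_cases h : x = 1
  · exact ⟨0, [], by simp, by simp [h], rfl⟩
  · exact ⟨1, [x], by simp [hx, h], by simp, rfl⟩

theorem fmSet_bddAbove {x : G} (hx : x ∈ S.M) : BddAbove (S.fmSet x) := by
  obtain ⟨n, _, hn⟩ := S.garside.noetherian x hx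
  refine ⟨n, fun k hk => ?_⟩
  obtain ⟨l, h1, h2, h3⟩ := hk
  rw [← h3]
  exact hn l h1 h2

theorem fm_mem_fmSet {x : G} (hx : x ∈ S.M) : S.fm x ∈ S.fmSet x :=
  Nat.sSup_mem (S.fmSet_nonempty hx) (S.fmSet_bddAbove hx)

/-- Strict divisibility increases the measure. -/
theorem fm_succ_le {c c' : G} (hc : c ∈ S.M) (hc' : c' ∈ S.M) (h : leR S.M c c')
    (hne : c' * c⁻¹ ≠ 1) : S.fm c + 1 ≤ S.fm c' := by
  obtain ⟨l, h1, h2, h3⟩ := S.fm_mem_fmSet hc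
  have : S.fm c + 1 ∈ S.fmSet c' := by
    refine ⟨(c' * c⁻¹) :: l, ?_, by simp [h2], by simp [h3]⟩
    intro s hs
    rcases List.mem_cons.1 hs with h' | h'
    · exact ⟨h' ▸ h, h' ▸ hne⟩
    · exact h1 s h'
  exact le_csSup (S.fmSet_bddAbove hc') this

theorem fm_le_of_leR {c c' : G} (hc : c ∈ S.M) (hc' : c' ∈ S.M) (h : leR S.M c c') :
    S.fm c ≤ S.fm c' := by
  by_cases hne : c' * c⁻¹ = 1
  · have : c' = c := by
      have : c' = (c' * c⁻¹) * c := by group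
      rw [this, hne, one_mul]
    rw [this]
  · exact le_of_lt (Nat.lt_of_lt_of_le (Nat.lt_succ_self _) (S.fm_succ_le hc hc' h hne))

end Setting

end GarsideOrder

namespace GarsideOrder

variable {G : Type*} [Group G]

namespace Setting

variable (S : Setting G)

theorem NP_le_M (δ : G) : parM S.M δ ≤ S.M :=
  Submonoid.closure_le.2 (fun _ hb => hb.1)

theorem D_subset_NP (δ : G) : DivR S.M δ ⊆ (parM S.M δ : Set G) := Submonoid.subset_closure

theorem list_prod_mem_NP {δ : G} {l : List G} (hl : ∀ s ∈ l, s ∈ DivR S.M δ) :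
    l.prod ∈ parM S.M δ :=
  Submonoid.list_prod_mem _ (fun x hx => S.D_subset_NP δ (hl x hx))

theorem mem_D_left {δ : G} (hp : IsParabolic S.M S.Δ δ) {u : G} (hu : u ∈ S.M)
    (h : leL S.M u δ) : u ∈ DivR S.M δ := by
  have hb := hp.balanced
  unfold Balanced at hb
  rw [hb]
  exact ⟨hu, h⟩

theorem D_left {δ : G} (hp : IsParabolic S.M S.Δ δ) {u : G} (hu : u ∈ DivR S.M δ) :
    leL S.M u δ := by
  have hb := hp.balanced
  unfold Balanced at hb
  rw [hb] at hu
  exact hu.2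

/-- The join of two divisors of `δ` is a divisor of `δ`, and so are the complements. -/
theorem join_D {δ : G} (hp : IsParabolic S.M S.Δ δ) {s t j : G} (hs : s ∈ DivR S.M δ)
    (ht : t ∈ DivR S.M δ) (hj : S.IsJoin s t j) :
    j ∈ DivR S.M δ ∧ j * t⁻¹ ∈ DivR S.M δ ∧ j * s⁻¹ ∈ DivR S.M δ := by
  have hjM : j ∈ S.M := mem_of_leR hs.1 hj.1
  have hjδ : leR S.M j δ := hj.2.2 δ hs.2 ht.2
  have hjD : j ∈ DivR S.M δ := ⟨hjM, hjδ⟩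
  have hL : leL S.M j δ := S.D_left hp hjD
  refine ⟨hjD, ?_, ?_⟩
  · refine S.mem_D_left hp hj.2.1 ?_
    have e : (j * t⁻¹)⁻¹ * δ = t * (j⁻¹ * δ) := by group
    unfold leL
    rw [e]
    exact S.M.mul_mem ht.1 hL
  · refine S.mem_D_left hp hj.1 ?_
    have e : (j * s⁻¹)⁻¹ * δ = s * (j⁻¹ * δ) := by group
    unfold leL
    rw [e]
    exact S.M.mul_mem hs.1 hL

/-- Join of a divisor of `δ` with an element of the parabolic submonoid. -/
theorem JD (hcar : S.car = ⊤) {δ : G} (hp : IsParabolic S.M S.Δ δ)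
    (l : List G) (hl : ∀ x ∈ l, x ∈ DivR S.M δ) :
    ∀ s ∈ DivR S.M δ, ∃ u, S.IsJoin s l.prod u ∧ u ∈ parM S.M δ ∧
      u * l.prod⁻¹ ∈ parM S.M δ ∧ u * s⁻¹ ∈ parM S.M δ := by
  induction l using List.reverseRecOn with
  | nil =>
      intro s hs
      refine ⟨s, by simpa using S.isJoin_one_right hs.1, S.D_subset_NP δ hs, ?_, ?_⟩
      · simpa using S.D_subset_NP δ hs
      · simpa using (parM S.M δ).one_mem
  | append_singleton l₁ t ih =>
      intro s hs
      have hl₁ : ∀ x ∈ l₁, x ∈ DivR S.M δ := fun x hx => hl x (by simp [hx])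
      have ht : t ∈ DivR S.M δ := hl t (by simp)
      have hy₁ : l₁.prod ∈ parM S.M δ := S.list_prod_mem_NP hl₁
      have hw := S.joinE_isJoin hcar s t
      set w := S.joinE hcar s t with hwdef
      obtain ⟨hwD, hwtD, hwsD⟩ := S.join_D hp hs ht hw
      obtain ⟨v, hv, hvNP, hvy, hvw⟩ := ih hl₁ (w * t⁻¹) hwtD
      have hprod : (l₁ ++ [t]).prod = l₁.prod * t := by simp
      set y₁ := l₁.prod with hy₁def
      refine ⟨v * t, ?_, ?_, ?_, ?_⟩
      · rw [hprod]
        refine ⟨?_, leR_mul_right t hv.2.1, ?_⟩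
        · unfold leR
          have e : v * t * s⁻¹ = (v * (w * t⁻¹)⁻¹) * (w * s⁻¹) := by group
          rw [e]
          exact S.M.mul_mem (S.NP_le_M δ hvw) hwsD.1
        · intro d hds hdy
          have htyt : leR S.M t (y₁ * t) := by
            unfold leR
            have e : y₁ * t * t⁻¹ = y₁ := by group
            rw [e]
            exact S.NP_le_M δ hy₁
          have htd : leR S.M t d := leR_trans htyt hdy
          have hwd : leR S.M w d := hw.2.2 d hds htd
          have h1 : leR S.M (w * t⁻¹) (d * t⁻¹) := by
            unfold leR
            have e : d * t⁻¹ * (w * t⁻¹)⁻¹ = d * w⁻¹ := by group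
            rw [e]
            exact hwd
          have h2 : leR S.M y₁ (d * t⁻¹) := by
            unfold leR
            have e : d * t⁻¹ * y₁⁻¹ = d * (y₁ * t)⁻¹ := by group
            rw [e]
            exact hdy
          have h3 : leR S.M v (d * t⁻¹) := hv.2.2 _ h1 h2
          unfold leR
          have e : d * (v * t)⁻¹ = d * t⁻¹ * v⁻¹ := by group
          rw [e]
          exact h3
      · exact (parM S.M δ).mul_mem hvNP (S.D_subset_NP δ ht)
      · rw [hprod]
        have e : v * t * (y₁ * t)⁻¹ = v * y₁⁻¹ := by group
        rw [e]
        exact hvy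
      · have e : v * t * s⁻¹ = (v * (w * t⁻¹)⁻¹) * (w * s⁻¹) := by group
        rw [e]
        exact (parM S.M δ).mul_mem hvw (S.D_subset_NP δ hwsD)

theorem JD' (hcar : S.car = ⊤) {δ : G} (hp : IsParabolic S.M S.Δ δ)
    {s y : G} (hs : s ∈ DivR S.M δ) (hy : y ∈ parM S.M δ) :
    ∃ u, S.IsJoin s y u ∧ u ∈ parM S.M δ ∧
      u * y⁻¹ ∈ parM S.M δ ∧ u * s⁻¹ ∈ parM S.M δ := by
  obtain ⟨l, hl, hprod⟩ := closure_exists_list hy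
  subst hprod
  exact S.JD hcar hp l hl s hs

/-- Parabolic submonoids are closed under joins, with complements. -/
theorem JJlist (hcar : S.car = ⊤) {δ : G} (hp : IsParabolic S.M S.Δ δ)
    (l : List G) (hl : ∀ x ∈ l, x ∈ DivR S.M δ) :
    ∀ y ∈ parM S.M δ, ∃ j, S.IsJoin l.prod y j ∧ j ∈ parM S.M δ ∧
      j * l.prod⁻¹ ∈ parM S.M δ ∧ j * y⁻¹ ∈ parM S.M δ := by
  induction l using List.reverseRecOn with
  | nil =>
      intro y hy
      exact ⟨y, by simpa using S.isJoin_one_left (S.NP_le_M δ hy), hy, by simpa using hy,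
        by simpa using (parM S.M δ).one_mem⟩
  | append_singleton l₁ s ih =>
      intro y hy
      have hl₁ : ∀ x ∈ l₁, x ∈ DivR S.M δ := fun x hx => hl x (by simp [hx])
      have hs : s ∈ DivR S.M δ := hl s (by simp)
      have hx₁ : l₁.prod ∈ parM S.M δ := S.list_prod_mem_NP hl₁
      obtain ⟨u, hu, huNP, huy, hus⟩ := S.JD' hcar hp hs hy
      obtain ⟨r, hr, hrNP, hrx₁, hru⟩ := ih hl₁ (u * s⁻¹) hus
      have hprod : (l₁ ++ [s]).prod = l₁.prod * s := by simp
      set x₁ := l₁.prod with hx₁def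
      have hjoin : S.IsJoin (x₁ * s) y (r * s) := by
        have h1 : S.IsJoin (x₁ * s) ((u * s⁻¹) * s) (r * s) := S.isJoin_mul_right s hr
        have e : (u * s⁻¹) * s = u := by group
        rw [e] at h1
        refine S.isJoin_absorb ?_ hu h1
        unfold leR
        have e2 : x₁ * s * s⁻¹ = x₁ := by group
        rw [e2]
        exact S.NP_le_M δ hx₁
      refine ⟨r * s, by rwa [hprod], (parM S.M δ).mul_mem hrNP (S.D_subset_NP δ hs), ?_, ?_⟩
      · rw [hprod]
        have e : r * s * (x₁ * s)⁻¹ = r * x₁⁻¹ := by group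
        rw [e]
        exact hrx₁
      · have e : r * s * y⁻¹ = (r * (u * s⁻¹)⁻¹) * (u * y⁻¹) := by group
        rw [e]
        exact (parM S.M δ).mul_mem hru huy

theorem JJ (hcar : S.car = ⊤) {δ : G} (hp : IsParabolic S.M S.Δ δ)
    {x y : G} (hx : x ∈ parM S.M δ) (hy : y ∈ parM S.M δ) :
    ∃ j, S.IsJoin x y j ∧ j ∈ parM S.M δ ∧
      j * x⁻¹ ∈ parM S.M δ ∧ j * y⁻¹ ∈ parM S.M δ := by
  obtain ⟨l, hl, hprod⟩ := closure_exists_list hx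
  subst hprod
  exact S.JJlist hcar hp l hl y hy

/-- Parabolic submonoids are closed under left-complements of right-divisors. -/
theorem Qlist (hcar : S.car = ⊤) {δ : G} (hp : IsParabolic S.M S.Δ δ)
    (l : List G) (hl : ∀ x ∈ l, x ∈ DivR S.M δ) :
    ∀ v ∈ parM S.M δ, leR S.M v l.prod → l.prod * v⁻¹ ∈ parM S.M δ := by
  induction l using List.reverseRecOn with
  | nil =>
      intro v hv hle
      have hv1 : v = 1 := by
        refine S.units_eq_one (S.NP_le_M δ hv) ?_
        simpa using leR_one_right hle
      rw [hv1]
      simpa using (parM S.M δ).one_mem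
  | append_singleton l₁ s ih =>
      intro v hv hle
      have hl₁ : ∀ x ∈ l₁, x ∈ DivR S.M δ := fun x hx => hl x (by simp [hx])
      have hs : s ∈ DivR S.M δ := hl s (by simp)
      have hx₁ : l₁.prod ∈ parM S.M δ := S.list_prod_mem_NP hl₁
      have hprod : (l₁ ++ [s]).prod = l₁.prod * s := by simp
      rw [hprod] at hle ⊢
      set x₁ := l₁.prod with hx₁def
      obtain ⟨u, hu, huNP, huv, hus⟩ := S.JD' hcar hp hs hv
      have hsx : leR S.M s (x₁ * s) := by
        unfold leR
        have e : x₁ * s * s⁻¹ = x₁ := by group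
        rw [e]
        exact S.NP_le_M δ hx₁
      have huu : leR S.M u (x₁ * s) := hu.2.2 _ hsx hle
      have hj₁ : leR S.M (u * s⁻¹) x₁ := by
        unfold leR
        have e : x₁ * (u * s⁻¹)⁻¹ = (x₁ * s) * u⁻¹ := by group
        rw [e]
        exact huu
      have hIH := ih hl₁ (u * s⁻¹) hus hj₁
      have e : x₁ * s * v⁻¹ = (x₁ * (u * s⁻¹)⁻¹) * (u * v⁻¹) := by group
      rw [e]
      exact (parM S.M δ).mul_mem hIH huv

theorem Qclosure (hcar : S.car = ⊤) {δ : G} (hp : IsParabolic S.M S.Δ δ)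
    {v u : G} (hv : v ∈ parM S.M δ) (hu : u ∈ parM S.M δ) (h : leR S.M v u) :
    u * v⁻¹ ∈ parM S.M δ := by
  obtain ⟨l, hl, hprod⟩ := closure_exists_list hu
  subst hprod
  exact S.Qlist hcar hp l hl v hv h

end Setting

end GarsideOrder

namespace GarsideOrder

namespace Setting

variable {G : Type*} [Group G] (S : Setting G)

/-- Existence of a maximal divisor in a parabolic submonoid. -/
theorem exists_tailMax (hcar : S.car = ⊤) {δ : G} (hp : IsParabolic S.M S.Δ δ)
    {a : G} (ha : a ∈ S.M) :
    ∃ τ, τ ∈ parM S.M δ ∧ leR S.M τ a ∧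
      ∀ c ∈ parM S.M δ, leR S.M c a → leR S.M c τ := by
  set T : Set ℕ := {k | ∃ c, c ∈ parM S.M δ ∧ leR S.M c a ∧ S.fm c = k} with hT
  have hTne : T.Nonempty := ⟨S.fm 1, 1, (parM S.M δ).one_mem, leR_one_iff.2 ha, rfl⟩
  have hTbdd : BddAbove T := by
    refine ⟨S.fm a, fun k hk => ?_⟩
    obtain ⟨c, hc1, hc2, hc3⟩ := hk
    rw [← hc3]
    exact S.fm_le_of_leR (S.NP_le_M δ hc1) ha hc2
  obtain ⟨τ, hτNP, hτa, hτm⟩ := Nat.sSup_mem hTne hTbdd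
  refine ⟨τ, hτNP, hτa, fun c hc hca => ?_⟩
  obtain ⟨j, hj, hjNP, hjτ, hjc⟩ := S.JJ hcar hp hτNP hc
  have hja : leR S.M j a := hj.2.2 a hτa hca
  have hjT : S.fm j ∈ T := ⟨j, hjNP, hja, rfl⟩
  have hle : S.fm j ≤ sSup T := le_csSup hTbdd hjT
  by_cases hne : j * τ⁻¹ = 1
  · have hjτeq : j = τ := by
      have e : j = (j * τ⁻¹) * τ := by group
      rw [e, hne, one_mul]
    rw [← hjτeq]
    exact hj.2.1
  · exfalso
    have := S.fm_succ_le (S.NP_le_M δ hτNP) (S.NP_le_M δ hjNP) hj.1 hne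
    omega

/-- The value of `tail` when a maximal divisor is known. -/
theorem tail_eq_max (N' : Submonoid G) {a τ : G} (hmem : τ ∈ N') (hle : leR S.M τ a)
    (hmax : ∀ c ∈ N', leR S.M c a → leR S.M c τ) : tail S.M N' a = τ := by
  have hwit : ∃ b : G, b ∈ N' ∧
      {c : G | c ∈ N' ∧ leR S.M c a} = {c : G | c ∈ N' ∧ leR S.M c b} := by
    refine ⟨τ, hmem, ?_⟩
    ext c
    constructor
    · rintro ⟨h1, h2⟩
      exact ⟨h1, hmax c h1 h2⟩
    · rintro ⟨h1, h2⟩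
      exact ⟨h1, leR_trans h2 hle⟩
  unfold tail
  rw [dif_pos hwit]
  obtain ⟨hbN, hbset⟩ := hwit.choose_spec
  have hiff := Set.ext_iff.1 hbset
  have hba : hwit.choose ∈ {c : G | c ∈ N' ∧ leR S.M c a} :=
    (hiff hwit.choose).2 ⟨hbN, leR_refl _ _⟩
  have h1 : leR S.M hwit.choose τ := hmax _ hbN hba.2
  have hτb : τ ∈ {c : G | c ∈ N' ∧ leR S.M c hwit.choose} :=
    (hiff τ).1 ⟨hmem, hle⟩
  exact S.leR_antisymm h1 hτb.2

/-- Tail of an element of the parabolic submonoid is itself. -/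
theorem tail_self (N' : Submonoid G) {x : G} (hx : x ∈ N') : tail S.M N' x = x :=
  S.tail_eq_max N' hx (leR_refl _ _) (fun _ _ h => h)

/-- Properties of the tail for parabolic submonoids. -/
theorem tail_par (hcar : S.car = ⊤) {δ : G} (hp : IsParabolic S.M S.Δ δ)
    {a : G} (ha : a ∈ S.M) :
    tail S.M (parM S.M δ) a ∈ parM S.M δ ∧ leR S.M (tail S.M (parM S.M δ) a) a ∧
      ∀ c ∈ parM S.M δ, leR S.M c a → leR S.M c (tail S.M (parM S.M δ) a) := by
  obtain ⟨τ, h1, h2, h3⟩ := S.exists_tailMax hcar hp ha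
  rw [S.tail_eq_max (parM S.M δ) h1 h2 h3]
  exact ⟨h1, h2, h3⟩

/-- After stripping the tail, no nontrivial divisor in the parabolic remains. -/
theorem tail_strip_trivial (hcar : S.car = ⊤) {δ : G} (hp : IsParabolic S.M S.Δ δ)
    {a : G} (ha : a ∈ S.M) :
    ∀ c ∈ parM S.M δ, leR S.M c (a * (tail S.M (parM S.M δ) a)⁻¹) → c = 1 := by
  obtain ⟨hτN, hτa, hτmax⟩ := S.tail_par hcar hp ha
  set τ := tail S.M (parM S.M δ) a with hτ
  intro c hc hca
  have hcτmem : c * τ ∈ parM S.M δ := (parM S.M δ).mul_mem hc hτN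
  have hcτa : leR S.M (c * τ) a := by
    unfold leR
    have e : a * (c * τ)⁻¹ = (a * τ⁻¹) * c⁻¹ := by group
    rw [e]
    exact hca
  have h := hτmax (c * τ) hcτmem hcτa
  have h2 : c⁻¹ ∈ S.M := by
    have e : τ * (c * τ)⁻¹ = c⁻¹ := by group
    rw [← e]
    exact h
  exact S.units_eq_one (S.NP_le_M δ hc) h2

end Setting

end GarsideOrder

namespace GarsideOrder

namespace Setting

variable {G : Type*} [Group G] (S : Setting G)

/-- The parabolic element used at step `i` of stripping. -/
def pδ (i : ℕ) : G := if i % 2 = 0 then S.δ1 else S.lam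

theorem pP_eq (i : ℕ) :
    (if i % 2 = 0 then S.M₁ else S.Nsub) = parM S.M (S.pδ i) := by
  by_cases h : i % 2 = 0 <;> simp [pδ, h, M₁, Nsub]

theorem pPar (i : ℕ) : IsParabolic S.M S.Δ (S.pδ i) := by
  by_cases h : i % 2 = 0 <;> simp [pδ, h]
  · exact S.par1
  · exact S.parH

theorem strip_succ (i : ℕ) (a : G) :
    strip S.M S.M₁ S.Nsub (i + 1) a = strip S.M S.M₁ S.Nsub i a *
      (tail S.M (parM S.M (S.pδ i)) (strip S.M S.M₁ S.Nsub i a))⁻¹ := by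
  rw [← S.pP_eq]
  rfl

theorem strip_mem (hcar : S.car = ⊤) {a : G} (ha : a ∈ S.M) (i : ℕ) :
    strip S.M S.M₁ S.Nsub i a ∈ S.M := by
  induction i with
  | zero => exact ha
  | succ n ih =>
      rw [S.strip_succ]
      exact (S.tail_par hcar (S.pPar n) ih).2.1

/-- Any nontrivial element of `M` has a nontrivial right divisor in `N ∪ M₁`. -/
theorem exists_div_union (hcar : S.car = ⊤) {a : G} (ha : a ∈ S.M) (hne : a ≠ 1) :
    ∃ t : G, t ≠ 1 ∧ (t ∈ S.Nsub ∨ t ∈ S.M₁) ∧ leR S.M t a := by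
  have hmem : a ∈ Submonoid.closure ((S.Nsub : Set G) ∪ (S.M₁ : Set G)) := by
    rw [show ((S.Nsub : Set G) ∪ (S.M₁ : Set G)) =
      ((parM S.M S.lam : Set G) ∪ (parM S.M S.δ1 : Set G)) from rfl, S.unionGen]
    exact ha
  obtain ⟨l, hl, hprod⟩ := closure_exists_list hmem
  clear hmem
  subst hprod
  induction l using List.reverseRecOn with
  | nil => simp at hne
  | append_singleton l₁ t ih =>
      have hl₁ : ∀ x ∈ l₁, x ∈ ((S.Nsub : Set G) ∪ (S.M₁ : Set G)) :=
        fun x hx => hl x (by simp [hx])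
      have ht : t ∈ ((S.Nsub : Set G) ∪ (S.M₁ : Set G)) := hl t (by simp)
      have hprod : (l₁ ++ [t]).prod = l₁.prod * t := by simp
      have hl₁M : l₁.prod ∈ S.M := by
        refine Submonoid.list_prod_mem _ (fun x hx => ?_)
        rcases hl₁ x hx with h | h
        · exact S.NP_le_M S.lam h
        · exact S.NP_le_M S.δ1 h
      by_cases h1 : t = 1
      · subst h1
        rw [hprod, mul_one] at hne ⊢
        exact ih (fun x hx => hl x (by simp [hx])) hl₁M hne
      · refine ⟨t, h1, ?_, ?_⟩
        · rcases ht with h | h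
          · exact Or.inl h
          · exact Or.inr h
        · rw [hprod]
          unfold leR
          have e : l₁.prod * t * t⁻¹ = l₁.prod := by group
          rw [e]
          exact hl₁M

/-- left-division version of `fm_succ_le`. -/
theorem fm_succ_le' {c d : G} (hc : c ∈ S.M) (hd : d ∈ S.M) (hd1 : d ≠ 1) :
    S.fm c + 1 ≤ S.fm (c * d) := by
  obtain ⟨l, h1, h2, h3⟩ := S.fm_mem_fmSet hc
  have hmem : S.fm c + 1 ∈ S.fmSet (c * d) := by
    refine ⟨l ++ [d], ?_, by simp [h2], by simp [h3]⟩
    intro s hs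
    rcases List.mem_append.1 hs with h | h
    · exact h1 s h
    · simp at h
      exact ⟨h ▸ hd, h ▸ hd1⟩
  exact le_csSup (S.fmSet_bddAbove (S.M.mul_mem hc hd)) hmem

/-- The stripping process terminates. -/
theorem exists_strip_eq_one (hcar : S.car = ⊤) {a : G} (ha : a ∈ S.M) :
    ∃ p, 1 ≤ p ∧ strip S.M S.M₁ S.Nsub p a = 1 := by
  by_contra hcon
  push_neg at hcon
  have hne : ∀ p, 1 ≤ p → strip S.M S.M₁ S.Nsub p a ≠ 1 := hcon
  -- the tails from step 1 on are nontrivial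
  have htail : ∀ i, 1 ≤ i →
      tail S.M (parM S.M (S.pδ i)) (strip S.M S.M₁ S.Nsub i a) ≠ 1 := by
    intro i hi
    obtain ⟨j, rfl⟩ := Nat.exists_eq_add_of_le hi
    set b := strip S.M S.M₁ S.Nsub (1 + j) a with hb
    have hbM : b ∈ S.M := S.strip_mem hcar ha _
    have hbne : b ≠ 1 := hne _ (by omega)
    have hstep : b = strip S.M S.M₁ S.Nsub j a *
        (tail S.M (parM S.M (S.pδ j)) (strip S.M S.M₁ S.Nsub j a))⁻¹ := by
      rw [hb, Nat.add_comm 1 j]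
      exact S.strip_succ j a
    -- previous-parity tail of b is trivial
    have hprev : ∀ c ∈ parM S.M (S.pδ j), leR S.M c b → c = 1 := by
      rw [hstep]
      exact S.tail_strip_trivial hcar (S.pPar j) (S.strip_mem hcar ha j)
    obtain ⟨t, ht1, ht2, ht3⟩ := S.exists_div_union hcar hbM hbne
    have hparity : (1 + j) % 2 ≠ j % 2 := by omega
    have htP : t ∈ parM S.M (S.pδ (1 + j)) := by
      rcases ht2 with h | h
      · -- t ∈ N
        by_cases hj : j % 2 = 0
        · have : (1 + j) % 2 = 1 := by omega
          simpa [pδ, this, Nsub] using h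
        · exfalso
          apply ht1
          apply hprev t _ ht3
          simpa [pδ, hj, Nsub] using h
      · -- t ∈ M₁
        by_cases hj : j % 2 = 0
        · exfalso
          apply ht1
          apply hprev t _ ht3
          simpa [pδ, hj, M₁] using h
        · have : (1 + j) % 2 = 0 := by omega
          simpa [pδ, this, M₁] using h
    have hmax := (S.tail_par hcar (S.pPar (1 + j)) hbM).2.2 t htP ht3
    intro htz
    rw [htz] at hmax
    exact ht1 (S.units_eq_one (by
      rcases ht2 with h | h
      · exact S.NP_le_M S.lam h
      · exact S.NP_le_M S.δ1 h) (leR_one_right hmax))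
  -- fm strictly decreases along the chain from step 1
  have hdec : ∀ i, 1 ≤ i → S.fm (strip S.M S.M₁ S.Nsub (i + 1) a) + 1 ≤
      S.fm (strip S.M S.M₁ S.Nsub i a) := by
    intro i hi
    set τ := tail S.M (parM S.M (S.pδ i)) (strip S.M S.M₁ S.Nsub i a) with hτ
    have hτmem : τ ∈ S.M :=
      S.NP_le_M (S.pδ i) (S.tail_par hcar (S.pPar i) (S.strip_mem hcar ha i)).1
    have hτne : τ ≠ 1 := htail i hi
    have hstep := S.strip_succ i a
    have he : strip S.M S.M₁ S.Nsub (i + 1) a * τ = strip S.M S.M₁ S.Nsub i a := by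
      rw [hstep, ← hτ]
      group
    calc S.fm (strip S.M S.M₁ S.Nsub (i + 1) a) + 1
        ≤ S.fm (strip S.M S.M₁ S.Nsub (i + 1) a * τ) :=
          S.fm_succ_le' (S.strip_mem hcar ha _) hτmem hτne
      _ = S.fm (strip S.M S.M₁ S.Nsub i a) := by rw [he]
  have hchain : ∀ n, S.fm (strip S.M S.M₁ S.Nsub (1 + n) a) + n ≤
      S.fm (strip S.M S.M₁ S.Nsub 1 a) := by
    intro n
    induction n with
    | zero => simp
    | succ k ih =>
        have h1 := hdec (1 + k) (by omega)
        have e : 1 + (k + 1) = (1 + k) + 1 := by omega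
        rw [e]
        omega
  have := hchain (S.fm (strip S.M S.M₁ S.Nsub 1 a) + 1)
  omega

theorem bh_mem (hcar : S.car = ⊤) {a : G} (ha : a ∈ S.M) :
    1 ≤ bh S.M S.M₁ S.Nsub a ∧ strip S.M S.M₁ S.Nsub (bh S.M S.M₁ S.Nsub a) a = 1 := by
  have hne : {p : ℕ | 1 ≤ p ∧ strip S.M S.M₁ S.Nsub p a = 1}.Nonempty :=
    S.exists_strip_eq_one hcar ha
  exact Nat.sInf_mem hne

theorem tail_M1 (hcar : S.car = ⊤) {a : G} (ha : a ∈ S.M) :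
    tail S.M S.M₁ a ∈ S.M₁ ∧ leR S.M (tail S.M S.M₁ a) a ∧
      ∀ c ∈ S.M₁, leR S.M c a → leR S.M c (tail S.M S.M₁ a) :=
  S.tail_par hcar S.par1 ha

theorem strip_one_eq (a : G) :
    strip S.M S.M₁ S.Nsub 1 a = a * (tail S.M S.M₁ a)⁻¹ := rfl

theorem dpt_zero_iff_mem_M1 (hcar : S.car = ⊤) {a : G} (ha : a ∈ S.M) :
    dpt S.M S.M₁ S.Nsub a = 0 ↔ a ∈ S.M₁ := by
  constructor
  · intro h
    have hbh := S.bh_mem hcar ha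
    have hb1 : bh S.M S.M₁ S.Nsub a = 1 := by
      unfold dpt at h
      omega
    rw [hb1] at hbh
    have := hbh.2
    rw [S.strip_one_eq] at this
    have he : a = tail S.M S.M₁ a := mul_inv_eq_one.1 this
    have hmem : tail S.M S.M₁ a ∈ S.M₁ := (S.tail_M1 hcar ha).1
    rw [he]
    exact hmem
  · intro h
    have htail : tail S.M S.M₁ a = a := S.tail_self S.M₁ h
    have h1 : strip S.M S.M₁ S.Nsub 1 a = 1 := by
      rw [S.strip_one_eq, htail]
      group
    have hmem : (1 : ℕ) ∈ {p : ℕ | 1 ≤ p ∧ strip S.M S.M₁ S.Nsub p a = 1} := ⟨le_refl _, h1⟩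
    have hle : bh S.M S.M₁ S.Nsub a ≤ 1 := Nat.sInf_le hmem
    unfold dpt
    omega

theorem strip_congr {u v : G} (h : strip S.M S.M₁ S.Nsub 1 u = strip S.M S.M₁ S.Nsub 1 v) :
    ∀ p, strip S.M S.M₁ S.Nsub (1 + p) u = strip S.M S.M₁ S.Nsub (1 + p) v := by
  intro p
  induction p with
  | zero => simpa using h
  | succ k ih =>
      have e : 1 + (k + 1) = (1 + k) + 1 := by omega
      rw [e, S.strip_succ, S.strip_succ, ih]

theorem bh_congr (hcar : S.car = ⊤)
    {u v : G} (h : strip S.M S.M₁ S.Nsub 1 u = strip S.M S.M₁ S.Nsub 1 v) :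
    bh S.M S.M₁ S.Nsub u = bh S.M S.M₁ S.Nsub v := by
  have hset : {p : ℕ | 1 ≤ p ∧ strip S.M S.M₁ S.Nsub p u = 1} =
      {p : ℕ | 1 ≤ p ∧ strip S.M S.M₁ S.Nsub p v = 1} := by
    ext p
    constructor
    · rintro ⟨h1, h2⟩
      obtain ⟨q, rfl⟩ := Nat.exists_eq_add_of_le h1
      exact ⟨h1, by rw [← S.strip_congr h q]; exact h2⟩
    · rintro ⟨h1, h2⟩
      obtain ⟨q, rfl⟩ := Nat.exists_eq_add_of_le h1
      exact ⟨h1, by rw [S.strip_congr h q]; exact h2⟩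
  unfold bh
  rw [hset]

theorem dpt_congr (hcar : S.car = ⊤)
    {u v : G} (h : strip S.M S.M₁ S.Nsub 1 u = strip S.M S.M₁ S.Nsub 1 v) :
    dpt S.M S.M₁ S.Nsub u = dpt S.M S.M₁ S.Nsub v := by
  unfold dpt
  rw [S.bh_congr hcar h]

end Setting

end GarsideOrder

namespace GarsideOrder

namespace Setting

variable {G : Type*} [Group G] (S : Setting G)

theorem delta1_mem_M1 : S.δ1 ∈ S.M₁ :=
  Submonoid.subset_closure ⟨S.par1.mem, leR_refl _ _⟩

theorem M1_le_M : ∀ x ∈ S.M₁, x ∈ S.M := fun _ hx => S.NP_le_M S.δ1 hx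

theorem M1_le_G1 : ∀ x ∈ S.M₁, x ∈ S.G₁ := by
  intro x hx
  have : S.M₁ ≤ (S.G₁).toSubmonoid := by
    apply Submonoid.closure_le.2
    intro b hb
    exact Subgroup.subset_closure hb
  exact this hx

theorem delta1_comm {g : G} (hg : g ∈ S.G₁) : Commute S.δ1 g :=
  S.delta1_central g hg

theorem theta_comm (hcar : S.car = ⊤) {g : G} (hg : g ∈ S.G₁) : Commute S.theta g := by
  have h1 : Commute S.Δ g := S.dcomm hcar g
  have h2 : Commute S.δ1⁻¹ g := (S.delta1_comm hg).inv_left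
  exact h1.mul_left h2

theorem theta_pow (hcar : S.car = ⊤) (k : ℕ) : S.theta ^ k = S.Δ ^ k * (S.δ1 ^ k)⁻¹ := by
  have h : Commute S.Δ S.δ1⁻¹ := S.dcomm hcar _
  show (S.Δ * S.δ1⁻¹) ^ k = _
  rw [h.mul_pow, inv_pow]

theorem dpow_mem (k : ℕ) : S.Δ ^ k ∈ S.M := S.M.pow_mem S.delta_mem k

theorem delta1_pow_leR_dpow (hcar : S.car = ⊤) (k : ℕ) : leR S.M (S.δ1 ^ k) (S.Δ ^ k) := by
  unfold leR
  rw [← S.theta_pow hcar]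
  exact S.M.pow_mem S.theta_mem k

/-- Every element of `M` right-divides a power of `Δ`. -/
theorem exists_leR_dpow (hcar : S.car = ⊤) {a : G} (ha : a ∈ S.M) :
    ∃ r : ℕ, S.Δ ^ r * a⁻¹ ∈ S.M := by
  have ha' : a ∈ Submonoid.closure (DivR S.M S.Δ) := by
    rw [S.garside.div_gen_monoid]; exact ha
  clear ha
  induction ha' using Submonoid.closure_induction with
  | mem s hs => exact ⟨1, by rw [pow_one]; exact hs.2⟩
  | one => exact ⟨0, by simpa using S.M.one_mem⟩
  | mul x y hx hy ihx ihy =>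
      obtain ⟨r1, h1⟩ := ihx
      obtain ⟨r2, h2⟩ := ihy
      refine ⟨r1 + r2, ?_⟩
      have hc : Commute (S.Δ ^ r1) (S.Δ ^ r2 * y⁻¹) := (S.dcomm hcar _).pow_left r1
      have e : S.Δ ^ (r1 + r2) * (x * y)⁻¹ =
          S.Δ ^ r1 * (S.Δ ^ r2 * y⁻¹) * x⁻¹ := by
        rw [pow_add]; group
      rw [e, hc.eq, mul_assoc]
      exact S.M.mul_mem h2 h1

theorem key_comm (hcar : S.car = ⊤) (u : G) (s : ℤ) : S.Δ ^ s * u = u * S.Δ ^ s :=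
  ((S.dcomm hcar u).zpow_left s).eq

/-- Every element of `M` has a `Δ`-form. -/
theorem exists_unmovable_form (hcar : S.car = ⊤) {m : G} (hm : m ∈ S.M) :
    ∃ a : G, ∃ e : ℕ, Unmovable S.M S.Δ a ∧ m = a * S.Δ ^ e := by
  obtain ⟨n, hn⟩ : ∃ n, S.fm m ≤ n := ⟨S.fm m, le_refl _⟩
  induction n generalizing m with
  | zero =>
      by_cases h : leR S.M S.Δ m
      · exfalso
        have h1 : m * S.Δ⁻¹ ∈ S.M := h
        have h2 := S.fm_succ_le' h1 S.delta_mem S.delta_ne_one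
        have e : m * S.Δ⁻¹ * S.Δ = m := by group
        rw [e] at h2
        omega
      · exact ⟨m, 0, ⟨hm, h⟩, by simp⟩
  | succ n ih =>
      by_cases h : leR S.M S.Δ m
      · have h1 : m * S.Δ⁻¹ ∈ S.M := h
        have h2 := S.fm_succ_le' h1 S.delta_mem S.delta_ne_one
        have e : m * S.Δ⁻¹ * S.Δ = m := by group
        rw [e] at h2
        obtain ⟨a, e', hu, hf⟩ := ih h1 (by omega)
        refine ⟨a, e' + 1, hu, ?_⟩
        have h3 : m = (m * S.Δ⁻¹) * S.Δ := by group
        rw [h3, hf, pow_succ, mul_assoc]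
      · exact ⟨m, 0, ⟨hm, h⟩, by simp⟩

/-- Every element of the group has a `Δ`-form. -/
theorem exists_dform (hcar : S.car = ⊤) (α : G) :
    ∃ a : G, ∃ t : ℤ, Unmovable S.M S.Δ a ∧ α = a * S.Δ ^ t := by
  have hstep : ∃ m ∈ S.M, ∃ t : ℤ, α = m * S.Δ ^ t := by
    have hα : α ∈ Subgroup.closure (DivR S.M S.Δ) := by
      rw [S.garside.div_gen_group, hcar]; exact Subgroup.mem_top α
    induction hα using Subgroup.closure_induction with
    | mem s hs => exact ⟨s, hs.1, 0, by simp⟩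
    | one => exact ⟨1, S.M.one_mem, 0, by simp⟩
    | mul x y hx hy ihx ihy =>
        obtain ⟨m1, hm1, t1, rfl⟩ := ihx
        obtain ⟨m2, hm2, t2, rfl⟩ := ihy
        refine ⟨m1 * m2, S.M.mul_mem hm1 hm2, t1 + t2, ?_⟩
        have e : m1 * S.Δ ^ t1 * (m2 * S.Δ ^ t2) = m1 * (S.Δ ^ t1 * m2) * S.Δ ^ t2 := by
          group
        rw [e, S.key_comm hcar m2 t1]
        group
    | inv x hx ihx =>
        obtain ⟨m1, hm1, t1, rfl⟩ := ihx
        obtain ⟨r, hr⟩ := S.exists_leR_dpow hcar hm1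
        refine ⟨S.Δ ^ r * m1⁻¹, hr, -t1 - r, ?_⟩
        rw [← zpow_natCast S.Δ r, mul_assoc, ← S.key_comm hcar m1⁻¹ (-t1 - r)]
        group
  obtain ⟨m, hmM, t, rfl⟩ := hstep
  obtain ⟨a, e, hu, hf⟩ := S.exists_unmovable_form hcar hmM
  refine ⟨a, (e : ℤ) + t, hu, ?_⟩
  rw [hf, mul_assoc, ← zpow_natCast S.Δ e, ← zpow_add]

end Setting

end GarsideOrder

namespace GarsideOrder

namespace Setting

variable {G : Type*} [Group G] (S : Setting G)

theorem d1pow_mem_M1 (k : ℕ) : S.δ1 ^ k ∈ S.M₁ := S.M₁.pow_mem S.delta1_mem_M1 k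

theorem exists_le_d1pow (hcar : S.car = ⊤) {x : G} (hx : x ∈ S.M₁) :
    ∃ r : ℕ, S.δ1 ^ r * x⁻¹ ∈ S.M₁ := by
  have hx' : x ∈ Submonoid.closure (DivR S.M S.δ1) := hx
  clear hx
  induction hx' using Submonoid.closure_induction with
  | mem s hs =>
      refine ⟨1, ?_⟩
      have h := S.Qclosure hcar S.par1 (Submonoid.subset_closure hs) S.delta1_mem_M1 hs.2
      rw [pow_one]; exact h
  | one => exact ⟨0, by simpa using S.M₁.one_mem⟩
  | mul x y hx hy ihx ihy =>
      obtain ⟨r1, h1⟩ := ihx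
      obtain ⟨r2, h2⟩ := ihy
      refine ⟨r1 + r2, ?_⟩
      have hg : S.δ1 ^ r2 * y⁻¹ ∈ S.G₁ := S.M1_le_G1 _ h2
      have hc : Commute (S.δ1 ^ r1) (S.δ1 ^ r2 * y⁻¹) :=
        (S.delta1_comm hg).pow_left r1
      have e : S.δ1 ^ (r1 + r2) * (x * y)⁻¹ =
          S.δ1 ^ r1 * (S.δ1 ^ r2 * y⁻¹) * x⁻¹ := by
        rw [pow_add]; group
      rw [e, hc.eq, mul_assoc]
      exact S.M₁.mul_mem h2 h1

theorem G1_fraction (hcar : S.car = ⊤) {g : G} (hg : g ∈ S.G₁) :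
    ∃ x z : G, x ∈ S.M₁ ∧ z ∈ S.M₁ ∧ g = z⁻¹ * x := by
  have hg' : g ∈ Subgroup.closure (DivR S.M S.δ1) := hg
  clear hg
  induction hg' using Subgroup.closure_induction with
  | mem s hs =>
      exact ⟨s, 1, Submonoid.subset_closure hs, S.M₁.one_mem, by simp⟩
  | one => exact ⟨1, 1, S.M₁.one_mem, S.M₁.one_mem, by simp⟩
  | mul a b ha hb iha ihb =>
      obtain ⟨x', z, hx', hz, rfl⟩ := iha
      obtain ⟨u, v, hu, hv, rfl⟩ := ihb
      obtain ⟨r1, hr1⟩ := S.exists_le_d1pow hcar hx'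
      obtain ⟨r2, hr2⟩ := S.exists_le_d1pow hcar hv
      have hqx : S.δ1 ^ (r1 + r2) * x'⁻¹ ∈ S.M₁ := by
        rw [show r1 + r2 = r2 + r1 by omega, pow_add, mul_assoc]
        exact S.M₁.mul_mem (S.d1pow_mem_M1 r2) hr1
      have hqv : S.δ1 ^ (r1 + r2) * v⁻¹ ∈ S.M₁ := by
        rw [pow_add, mul_assoc]
        exact S.M₁.mul_mem (S.d1pow_mem_M1 r1) hr2
      refine ⟨S.δ1 ^ (r1 + r2) * v⁻¹ * u, S.δ1 ^ (r1 + r2) * x'⁻¹ * z,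
        S.M₁.mul_mem hqv hu, S.M₁.mul_mem hqx hz, by group⟩
  | inv a ha iha =>
      obtain ⟨x', z, hx', hz, rfl⟩ := iha
      obtain ⟨r, hr⟩ := S.exists_le_d1pow hcar hx'
      exact ⟨S.δ1 ^ r * x'⁻¹ * z, S.δ1 ^ r, S.M₁.mul_mem hr hz, S.d1pow_mem_M1 r,
        by group⟩

/-- The `M₁`-tail of `Δ^k` has the form `ρ * δ1^k`. -/
theorem tau_dpow (hcar : S.car = ⊤) (k : ℕ) :
    ∃ ρ : G, ρ ∈ S.M₁ ∧ tail S.M S.M₁ (S.Δ ^ k) = ρ * S.δ1 ^ k := by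
  have h := S.tail_M1 hcar (S.dpow_mem k)
  have hmax := h.2.2 (S.δ1 ^ k) (S.d1pow_mem_M1 k) (S.delta1_pow_leR_dpow hcar k)
  refine ⟨tail S.M S.M₁ (S.Δ ^ k) * (S.δ1 ^ k)⁻¹, ?_, by group⟩
  exact S.Qclosure hcar S.par1 (S.d1pow_mem_M1 k) h.1 hmax

/-- The `M₁`-tail of `Δ^k * x` for `x ∈ M₁`. -/
theorem tailcomp (hcar : S.car = ⊤) (k : ℕ) {x : G} (hx : x ∈ S.M₁) :
    tail S.M S.M₁ (S.Δ ^ k * x) = tail S.M S.M₁ (S.Δ ^ k) * x := by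
  have h := S.tail_M1 hcar (S.dpow_mem k)
  set τ := tail S.M S.M₁ (S.Δ ^ k) with hτdef
  apply S.tail_eq_max S.M₁ (S.M₁.mul_mem h.1 hx)
  · unfold leR
    have e : S.Δ ^ k * x * (τ * x)⁻¹ = S.Δ ^ k * τ⁻¹ := by group
    rw [e]
    exact h.2.1
  · intro c hc hca
    obtain ⟨j, hj, hjM1, hjc, hjx⟩ := S.JJ hcar S.par1 hc hx
    have hxle : leR S.M x (S.Δ ^ k * x) := by
      unfold leR
      have e : S.Δ ^ k * x * x⁻¹ = S.Δ ^ k := by group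
      rw [e]
      exact S.dpow_mem k
    have hjle : leR S.M j (S.Δ ^ k * x) := hj.2.2 _ hca hxle
    have heM : leR S.M (j * x⁻¹) (S.Δ ^ k) := by
      unfold leR
      have e : S.Δ ^ k * (j * x⁻¹)⁻¹ = S.Δ ^ k * x * j⁻¹ := by group
      rw [e]
      exact hjle
    have hjτ := h.2.2 (j * x⁻¹) hjx heM
    have hjτx : leR S.M j (τ * x) := by
      unfold leR
      have e : τ * x * j⁻¹ = τ * (j * x⁻¹)⁻¹ := by group
      rw [e]
      exact hjτ
    exact leR_trans hj.1 hjτx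

/-- `strip 1 (θ^k * a₀) = strip 1 (Δ^k)` for `a₀ ∈ M₁`. -/
theorem strip1_theta (hcar : S.car = ⊤) (k : ℕ) {a₀ : G} (ha₀ : a₀ ∈ S.M₁) :
    strip S.M S.M₁ S.Nsub 1 (S.theta ^ k * a₀) = strip S.M S.M₁ S.Nsub 1 (S.Δ ^ k) := by
  have h := S.tail_M1 hcar (S.dpow_mem k)
  obtain ⟨ρ, hρ, hρeq⟩ := S.tau_dpow hcar k
  set τ := tail S.M S.M₁ (S.Δ ^ k) with hτdef
  have hρa : leR S.M (ρ * a₀) (S.theta ^ k * a₀) := by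
    unfold leR
    have e : S.theta ^ k * a₀ * (ρ * a₀)⁻¹ = S.Δ ^ k * (S.δ1 ^ k)⁻¹ * ρ⁻¹ := by
      rw [S.theta_pow hcar]; group
    have e2 : S.Δ ^ k * (S.δ1 ^ k)⁻¹ * ρ⁻¹ = S.Δ ^ k * τ⁻¹ := by
      rw [hρeq]; group
    rw [e, e2]
    exact h.2.1
  have htail : tail S.M S.M₁ (S.theta ^ k * a₀) = ρ * a₀ := by
    apply S.tail_eq_max S.M₁ (S.M₁.mul_mem hρ ha₀) hρa
    intro c hc hca
    obtain ⟨j, hj, hjM1, hjc, hjρa⟩ := S.JJ hcar S.par1 hc (S.M₁.mul_mem hρ ha₀)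
    have hjle : leR S.M j (S.theta ^ k * a₀) := hj.2.2 _ hca hρa
    have hq : S.Δ ^ k * τ⁻¹ * (j * (ρ * a₀)⁻¹)⁻¹ ∈ S.M := by
      have e : S.Δ ^ k * τ⁻¹ * (j * (ρ * a₀)⁻¹)⁻¹ = S.theta ^ k * a₀ * j⁻¹ := by
        rw [hρeq, S.theta_pow hcar]; group
      rw [e]
      exact hjle
    have heτ : leR S.M (j * (ρ * a₀)⁻¹ * τ) (S.Δ ^ k) := by
      unfold leR
      have e : S.Δ ^ k * (j * (ρ * a₀)⁻¹ * τ)⁻¹ = S.Δ ^ k * τ⁻¹ * (j * (ρ * a₀)⁻¹)⁻¹ := by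
        group
      rw [e]
      exact hq
    have hmem : j * (ρ * a₀)⁻¹ * τ ∈ S.M₁ := S.M₁.mul_mem hjρa h.1
    have hle := h.2.2 _ hmem heτ
    have he1 : (j * (ρ * a₀)⁻¹)⁻¹ ∈ S.M := by
      have e : τ * (j * (ρ * a₀)⁻¹ * τ)⁻¹ = (j * (ρ * a₀)⁻¹)⁻¹ := by group
      rw [← e]
      exact hle
    have he2 : j * (ρ * a₀)⁻¹ = 1 := S.units_eq_one (S.M1_le_M _ hjρa) he1
    have hjeq : j = ρ * a₀ := mul_inv_eq_one.1 he2
    rw [← hjeq]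
    exact hj.1
  rw [S.strip_one_eq, S.strip_one_eq, htail]
  have e : S.theta ^ k * a₀ * (ρ * a₀)⁻¹ = S.Δ ^ k * τ⁻¹ := by
    rw [S.theta_pow hcar, hρeq]; group
  rw [e]

/-- depth of theta elements. -/
theorem dpt_theta {ζ : ℕ} (hcar : S.car = ⊤) (hA : S.condA ζ) {k : ℕ} (hk : 1 ≤ k)
    {a₀ : G} (ha₀ : a₀ ∈ S.M₁) :
    dpt S.M S.M₁ S.Nsub (S.theta ^ k * a₀) = ζ * k + 1 := by
  rw [S.dpt_congr hcar (S.strip1_theta hcar k ha₀)]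
  exact hA k hk

theorem strip1_of_M1 {x : G} (hx : x ∈ S.M₁) : strip S.M S.M₁ S.Nsub 1 x = 1 := by
  rw [S.strip_one_eq, S.tail_self S.M₁ hx]
  group

theorem no_delta {ζ : ℕ} (hcar : S.car = ⊤) (hA : S.condA ζ) {u : ℕ} (hu : 1 ≤ u)
    (h : S.Δ ^ u ∈ S.G₁) : False := by
  obtain ⟨x, z, hx, hz, heq⟩ := S.G1_fraction hcar h
  have hxz : x = S.Δ ^ u * z := by
    have h1 : x = z * S.Δ ^ u := by
      rw [heq]; group
    rw [h1, ((S.dcomm hcar z).pow_left u).eq]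
  have h1 : strip S.M S.M₁ S.Nsub 1 x = 1 := S.strip1_of_M1 hx
  have h2 : strip S.M S.M₁ S.Nsub 1 (S.Δ ^ u * z) =
      S.Δ ^ u * (tail S.M S.M₁ (S.Δ ^ u))⁻¹ := by
    rw [S.strip_one_eq, S.tailcomp hcar u hz]
    group
  rw [hxz, h2] at h1
  have h3 : S.Δ ^ u = tail S.M S.M₁ (S.Δ ^ u) := mul_inv_eq_one.1 h1
  have h4 : S.Δ ^ u ∈ S.M₁ := by
    rw [h3]
    exact (S.tail_M1 hcar (S.dpow_mem u)).1
  have h5 : dpt S.M S.M₁ S.Nsub (S.Δ ^ u) = 0 :=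
    (S.dpt_zero_iff_mem_M1 hcar (S.dpow_mem u)).2 h4
  have h6 := hA u hu
  omega

theorem no_delta_zpow {ζ : ℕ} (hcar : S.car = ⊤) (hA : S.condA ζ) {t : ℤ} (ht : t ≠ 0)
    (h : S.Δ ^ t ∈ S.G₁) : False := by
  rcases lt_or_gt_of_ne ht with h1 | h1
  · apply S.no_delta hcar hA (u := (-t).toNat) (by omega)
    have e : S.Δ ^ ((-t).toNat) = (S.Δ ^ t)⁻¹ := by
      rw [← zpow_natCast, ← zpow_neg]
      congr 1
      omega
    rw [e]
    exact S.G₁.inv_mem h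
  · apply S.no_delta hcar hA (u := t.toNat) (by omega)
    have e : S.Δ ^ (t.toNat) = S.Δ ^ t := by
      rw [← zpow_natCast]
      congr 1
      omega
    rw [e]
    exact h

end Setting

end GarsideOrder

namespace GarsideOrder

namespace Setting

variable {G : Type*} [Group G] (S : Setting G)

theorem zpow_nonpos_eq {g : G} {t : ℤ} (h : t ≤ 0) : g ^ t = (g ^ ((-t).toNat))⁻¹ := by
  rw [← zpow_natCast, ← zpow_neg]
  congr 1
  omega

theorem zpow_nonneg_eq {g : G} {t : ℤ} (h : 0 ≤ t) : g ^ t = g ^ (t.toNat) := by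
  rw [← zpow_natCast]
  congr 1
  omega

theorem mem_Neg_intro {ζ : ℕ} (hA : S.condA ζ) {α a : G} {k : ℕ}
    (hu : Unmovable S.M S.Δ a) (hk : 1 ≤ k) (heq : α = a * (S.Δ ^ k)⁻¹)
    (hlt : dpt S.M S.M₁ S.Nsub a < ζ * k + 1) : α ∈ S.Neg :=
  ⟨a, k, hu, hk, heq, by rw [hA k hk]; exact hlt⟩

theorem mem_Pos_intro {ζ : ℕ} (hA : S.condA ζ) {α a : G} {k : ℕ}
    (hu : Unmovable S.M S.Δ a) (hk : 1 ≤ k) (heq : α⁻¹ = a * (S.Δ ^ k)⁻¹)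
    (hlt : dpt S.M S.M₁ S.Nsub a < ζ * k + 1) : α ∈ S.Pos :=
  S.mem_Neg_intro hA hu hk heq hlt

theorem dpt_one_eq (hcar : S.car = ⊤) : dpt S.M S.M₁ S.Nsub (1 : G) = 0 :=
  (S.dpt_zero_iff_mem_M1 hcar S.M.one_mem).2 S.M₁.one_mem

/-- `m = p` whenever `θ^p * c = Δ^m` with `c ∈ G₁`. -/
theorem m_eq_of_theta {ζ : ℕ} (hcar : S.car = ⊤) (hA : S.condA ζ) {p m : ℕ} {c : G}
    (hc : c ∈ S.G₁) (he : S.theta ^ p * c = S.Δ ^ m) : m = p := by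
  have e1 : S.Δ ^ p * ((S.δ1 ^ p)⁻¹ * c) = S.Δ ^ m := by
    rw [← mul_assoc, ← S.theta_pow hcar]
    exact he
  have e2 : S.Δ ^ ((m : ℤ) - p) = (S.δ1 ^ p)⁻¹ * c := by
    have e3 : (S.δ1 ^ p)⁻¹ * c = (S.Δ ^ p)⁻¹ * S.Δ ^ m := by
      rw [← e1]; group
    rw [e3, ← zpow_natCast S.Δ m, ← zpow_natCast S.Δ p, ← zpow_neg, ← zpow_add]
    congr 1
    omega
  by_contra hne
  have hne' : (m : ℤ) - p ≠ 0 := by omega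
  apply S.no_delta_zpow hcar hA hne'
  rw [e2]
  exact S.G₁.mul_mem
    (S.G₁.inv_mem (S.G₁.pow_mem (S.M1_le_G1 _ S.delta1_mem_M1) p)) hc

end Setting

end GarsideOrder

namespace GarsideOrder

theorem zpow_eq_inv_pow' {G : Type*} [Group G] {g : G} {t : ℤ} {k : ℕ}
    (h : (k : ℤ) = -t) : g ^ t = (g ^ k)⁻¹ := by
  rw [← zpow_natCast g k, h, zpow_neg, inv_inv]

theorem zpow_eq_pow' {G : Type*} [Group G] {g : G} {t : ℤ} {k : ℕ}
    (h : (k : ℤ) = t) : g ^ t = g ^ k := by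
  rw [← zpow_natCast g k, h]

end GarsideOrder

open GarsideOrder in
/-- Assuming Conditions A and B with constant `ζ ≥ 1`, every element of `G` is
`(H, G₁)`-positive, or `(H, G₁)`-negative, or belongs to `G₁`. -/
theorem statement8 {G : Type*} [Group G] (S : Setting G) (hcar : S.car = ⊤)
    (ζ : ℕ) (hζ : 1 ≤ ζ) (hA : S.condA ζ) (hB : S.condB ζ) :
    ∀ α : G, α ∈ S.Pos ∨ α ∈ S.Neg ∨ α ∈ S.G₁ := by
  classical
  have hζZ : (1 : ℤ) ≤ (ζ : ℤ) := by exact_mod_cast hζ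
  intro α
  obtain ⟨a, t, ⟨haM, hamov⟩, rfl⟩ := S.exists_dform hcar α
  by_cases ha1 : a = 1
  · -- pure Δ-power
    subst ha1
    rcases lt_trichotomy t 0 with ht | ht | ht
    · refine Or.inr (Or.inl (S.mem_Neg_intro hA S.one_unmovable
        (k := (-t).toNat) (by omega) ?_ ?_))
      · rw [zpow_eq_inv_pow' (show (((-t).toNat : ℕ) : ℤ) = -t by omega)]
      · rw [S.dpt_one_eq hcar]
        exact Nat.succ_pos _
    · subst ht
      exact Or.inr (Or.inr (by simpa using S.G₁.one_mem))
    · refine Or.inl (S.mem_Pos_intro hA S.one_unmovable (k := t.toNat) (by omega) ?_ ?_)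
      · have e : (1 * S.Δ ^ t)⁻¹ = 1 * S.Δ ^ (-t) := by group
        rw [e, zpow_eq_inv_pow' (show ((t.toNat : ℕ) : ℤ) = -(-t) by omega)]
      · rw [S.dpt_one_eq hcar]
        exact Nat.succ_pos _
  -- main case : a ≠ 1
  have hm0 : ∃ r : ℕ, S.Δ ^ r * a⁻¹ ∈ S.M := S.exists_leR_dpow hcar haM
  set m := Nat.find hm0 with hmdef
  have hmspec : S.Δ ^ m * a⁻¹ ∈ S.M := Nat.find_spec hm0
  set b := S.Δ ^ m * a⁻¹ with hbdef
  have hbM : b ∈ S.M := hmspec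
  have hm1 : 1 ≤ m := by
    by_contra h
    have hm00 : m = 0 := by omega
    have h2 : S.Δ ^ m * a⁻¹ ∈ S.M := hmspec
    rw [hm00, pow_zero, one_mul] at h2
    exact ha1 (S.units_eq_one haM h2)
  have hbun : Unmovable S.M S.Δ b := by
    refine ⟨hbM, fun hmov => ?_⟩
    have hc : a⁻¹ * S.Δ⁻¹ = S.Δ⁻¹ * a⁻¹ := ((S.dcomm hcar a).inv_left.inv_right).eq.symm
    have e : b * S.Δ⁻¹ = S.Δ ^ (m - 1) * a⁻¹ := by
      rw [hbdef]
      calc S.Δ ^ m * a⁻¹ * S.Δ⁻¹ = S.Δ ^ m * (a⁻¹ * S.Δ⁻¹) := by group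
        _ = S.Δ ^ m * (S.Δ⁻¹ * a⁻¹) := by rw [hc]
        _ = S.Δ ^ (m - 1) * a⁻¹ := by
            conv_lhs => rw [show m = (m - 1) + 1 by omega]
            rw [pow_succ]
            group
    unfold leR at hmov
    rw [e] at hmov
    exact Nat.find_min hm0 (show m - 1 < m by omega) hmov
  have hab : a * b = S.Δ ^ m := by
    rw [hbdef]
    have hc := ((S.dcomm hcar a).pow_left m).eq
    calc a * (S.Δ ^ m * a⁻¹) = a * S.Δ ^ m * a⁻¹ := by group
      _ = S.Δ ^ m * a * a⁻¹ := by rw [← hc]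
      _ = S.Δ ^ m := by group
  have hainv : (a * S.Δ ^ t)⁻¹ = b * S.Δ ^ (-t - m) := by
    rw [hbdef, ← zpow_natCast S.Δ m, mul_assoc, ← S.key_comm hcar a⁻¹ (-t - m)]
    group
  by_cases hTT : a ∈ thetaBar S.M₁ S.theta ∧ b ∈ thetaBar S.M₁ S.theta
  · -- both in Θ̄
    rcases hTT.1 with haθ | haM1
    · -- a ∈ Θ
      obtain ⟨j, hj1, a₀, ha₀, haeq⟩ := haθ
      have hdpta : dpt S.M S.M₁ S.Nsub a = ζ * j + 1 := by
        rw [haeq]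
        exact S.dpt_theta hcar hA hj1 ha₀
      rcases hTT.2 with hbθ | hbM1
      · -- a ∈ Θ, b ∈ Θ
        obtain ⟨l, hl1, b₀, hb₀, hbeq⟩ := hbθ
        have hdptb : dpt S.M S.M₁ S.Nsub b = ζ * l + 1 := by
          rw [hbeq]
          exact S.dpt_theta hcar hA hl1 hb₀
        have hcθ : S.theta ^ l * a₀ = a₀ * S.theta ^ l :=
          ((S.theta_comm hcar (S.M1_le_G1 _ ha₀)).pow_left l).eq
        have he : S.theta ^ (j + l) * (a₀ * b₀) = S.Δ ^ m := by
          calc S.theta ^ (j + l) * (a₀ * b₀)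
              = S.theta ^ j * ((S.theta ^ l * a₀) * b₀) := by rw [pow_add]; group
            _ = S.theta ^ j * ((a₀ * S.theta ^ l) * b₀) := by rw [hcθ]
            _ = (S.theta ^ j * a₀) * (S.theta ^ l * b₀) := by group
            _ = S.Δ ^ m := by rw [← haeq, ← hbeq]; exact hab
        have hmjl : m = j + l := S.m_eq_of_theta hcar hA
          (S.G₁.mul_mem (S.M1_le_G1 _ ha₀) (S.M1_le_G1 _ hb₀)) he
        rcases lt_trichotomy (t + (j : ℤ)) 0 with ht | ht | ht
        · refine Or.inr (Or.inl (S.mem_Neg_intro hA ⟨haM, hamov⟩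
            (k := (-t).toNat) (by omega) ?_ ?_))
          · rw [zpow_eq_inv_pow' (show (((-t).toNat : ℕ) : ℤ) = -t by omega)]
          · rw [hdpta]
            have hjk : j < (-t).toNat := by omega
            have := mul_lt_mul_of_pos_left hjk (show 0 < ζ by omega)
            omega
        · refine Or.inr (Or.inr ?_)
          have ht' : t = -(j : ℤ) := by omega
          have e : a * S.Δ ^ t = (S.δ1 ^ j)⁻¹ * a₀ := by
            rw [haeq, ht', S.theta_pow hcar]
            have e2 : S.Δ ^ j * (S.δ1 ^ j)⁻¹ * a₀ * S.Δ ^ (-(j : ℤ)) =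
                S.Δ ^ j * (((S.δ1 ^ j)⁻¹ * a₀) * S.Δ ^ (-(j : ℤ))) := by group
            rw [e2, ← S.key_comm hcar ((S.δ1 ^ j)⁻¹ * a₀) (-(j : ℤ)),
              ← zpow_natCast S.Δ j]
            group
          rw [e]
          exact S.G₁.mul_mem
            (S.G₁.inv_mem (S.G₁.pow_mem (S.M1_le_G1 _ S.delta1_mem_M1) j))
            (S.M1_le_G1 _ ha₀)
        · refine Or.inl (S.mem_Pos_intro hA hbun (k := (t + m).toNat) (by omega) ?_ ?_)
          · rw [hainv, zpow_eq_inv_pow'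
              (show (((t + (m : ℤ)).toNat : ℕ) : ℤ) = -(-t - m) by omega)]
          · rw [hdptb]
            have hlk : l < (t + (m : ℤ)).toNat := by omega
            have := mul_lt_mul_of_pos_left hlk (show 0 < ζ by omega)
            omega
      · -- a ∈ Θ, b ∈ M₁
        have hdptb : dpt S.M S.M₁ S.Nsub b = 0 :=
          (S.dpt_zero_iff_mem_M1 hcar hbM).2 hbM1
        have he : S.theta ^ j * (a₀ * b) = S.Δ ^ m := by
          rw [← mul_assoc, ← haeq]
          exact hab
        have hmj : m = j := S.m_eq_of_theta hcar hA
          (S.G₁.mul_mem (S.M1_le_G1 _ ha₀) (S.M1_le_G1 _ hbM1)) he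
        rcases lt_trichotomy (t + (j : ℤ)) 0 with ht | ht | ht
        · refine Or.inr (Or.inl (S.mem_Neg_intro hA ⟨haM, hamov⟩
            (k := (-t).toNat) (by omega) ?_ ?_))
          · rw [zpow_eq_inv_pow' (show (((-t).toNat : ℕ) : ℤ) = -t by omega)]
          · rw [hdpta]
            have hjk : j < (-t).toNat := by omega
            have := mul_lt_mul_of_pos_left hjk (show 0 < ζ by omega)
            omega
        · refine Or.inr (Or.inr ?_)
          have e0 : -t - (m : ℤ) = 0 := by omega
          have hbinv : (a * S.Δ ^ t)⁻¹ = b := by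
            rw [hainv, e0, zpow_zero, mul_one]
          have h9 : a * S.Δ ^ t = b⁻¹ := by rw [← hbinv, inv_inv]
          rw [h9]
          exact S.G₁.inv_mem (S.M1_le_G1 _ hbM1)
        · refine Or.inl (S.mem_Pos_intro hA hbun (k := (t + m).toNat) (by omega) ?_ ?_)
          · rw [hainv, zpow_eq_inv_pow'
              (show (((t + (m : ℤ)).toNat : ℕ) : ℤ) = -(-t - m) by omega)]
          · rw [hdptb]
            exact Nat.succ_pos _
    · -- a ∈ M₁
      have hdpta : dpt S.M S.M₁ S.Nsub a = 0 :=
        (S.dpt_zero_iff_mem_M1 hcar haM).2 haM1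
      rcases hTT.2 with hbθ | hbM1
      · -- a ∈ M₁, b ∈ Θ
        obtain ⟨l, hl1, b₀, hb₀, hbeq⟩ := hbθ
        have hcθ : S.theta ^ l * a = a * S.theta ^ l :=
          ((S.theta_comm hcar (S.M1_le_G1 _ haM1)).pow_left l).eq
        have he : S.theta ^ l * (a * b₀) = S.Δ ^ m := by
          calc S.theta ^ l * (a * b₀) = (S.theta ^ l * a) * b₀ := by group
            _ = (a * S.theta ^ l) * b₀ := by rw [hcθ]
            _ = a * (S.theta ^ l * b₀) := by group
            _ = S.Δ ^ m := by rw [← hbeq]; exact hab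
        have hml : m = l := S.m_eq_of_theta hcar hA
          (S.G₁.mul_mem (S.M1_le_G1 _ haM1) (S.M1_le_G1 _ hb₀)) he
        have hdptb : dpt S.M S.M₁ S.Nsub b = ζ * m + 1 := by
          rw [hbeq, hml]
          exact S.dpt_theta hcar hA hl1 hb₀
        rcases lt_trichotomy t 0 with ht | ht | ht
        · refine Or.inr (Or.inl (S.mem_Neg_intro hA ⟨haM, hamov⟩
            (k := (-t).toNat) (by omega) ?_ ?_))
          · rw [zpow_eq_inv_pow' (show (((-t).toNat : ℕ) : ℤ) = -t by omega)]
          · rw [hdpta]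
            exact Nat.succ_pos _
        · subst ht
          exact Or.inr (Or.inr (by simpa using S.M1_le_G1 _ haM1))
        · refine Or.inl (S.mem_Pos_intro hA hbun (k := (t + m).toNat) (by omega) ?_ ?_)
          · rw [hainv, zpow_eq_inv_pow'
              (show (((t + (m : ℤ)).toNat : ℕ) : ℤ) = -(-t - m) by omega)]
          · rw [hdptb]
            have hmk : m < (t + (m : ℤ)).toNat := by omega
            have := mul_lt_mul_of_pos_left hmk (show 0 < ζ by omega)
            omega
      · -- a ∈ M₁, b ∈ M₁
        exfalso
        have h5 : S.Δ ^ m ∈ S.M₁ := hab ▸ S.M₁.mul_mem haM1 hbM1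
        have h6 : dpt S.M S.M₁ S.Nsub (S.Δ ^ m) = 0 :=
          (S.dpt_zero_iff_mem_M1 hcar (S.dpow_mem m)).2 h5
        have h7 := hA m hm1
        omega
  · -- Condition B applies
    have hcb := hB a b 1 ((m : ℕ) : ℤ) ⟨haM, hamov⟩ hbun hTT S.one_unmovable
      (by rw [hab, one_mul, zpow_natCast])
    obtain ⟨ε, hεle, hεeq, hεimp⟩ := hcb
    have hε1 : ε = 1 := hεimp (Or.inr (Or.inr S.M₁.one_mem))
    rw [hε1, S.dpt_one_eq hcar] at hεeq
    have hsum : ((dpt S.M S.M₁ S.Nsub a : ℤ)) + (dpt S.M S.M₁ S.Nsub b : ℤ) =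
        (ζ : ℤ) * m + 1 := by push_cast at hεeq ⊢; linarith
    have hA0 : (0 : ℤ) ≤ (dpt S.M S.M₁ S.Nsub a : ℤ) := by positivity
    have hB0 : (0 : ℤ) ≤ (dpt S.M S.M₁ S.Nsub b : ℤ) := by positivity
    by_cases hnegc : t < 0 ∧ (dpt S.M S.M₁ S.Nsub a : ℤ) < (ζ : ℤ) * (-t) + 1
    · obtain ⟨ht, hlt'⟩ := hnegc
      refine Or.inr (Or.inl (S.mem_Neg_intro hA ⟨haM, hamov⟩
        (k := (-t).toNat) (by omega) ?_ ?_))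
      · rw [zpow_eq_inv_pow' (show (((-t).toNat : ℕ) : ℤ) = -t by omega)]
      · have hk' : (((-t).toNat : ℕ) : ℤ) = -t := by omega
        rw [← hk'] at hlt'
        exact_mod_cast hlt'
    by_cases hposc : 0 < t + (m : ℤ) ∧
        (dpt S.M S.M₁ S.Nsub b : ℤ) < (ζ : ℤ) * (t + m) + 1
    · obtain ⟨ht, hlt'⟩ := hposc
      refine Or.inl (S.mem_Pos_intro hA hbun (k := (t + m).toNat) (by omega) ?_ ?_)
      · rw [hainv, zpow_eq_inv_pow'
          (show (((t + (m : ℤ)).toNat : ℕ) : ℤ) = -(-t - m) by omega)]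
      · have hk' : (((t + (m : ℤ)).toNat : ℕ) : ℤ) = t + m := by omega
        rw [← hk'] at hlt'
        exact_mod_cast hlt'
    push_neg at hnegc hposc
    rcases lt_trichotomy t 0 with ht | ht | ht
    · -- t < 0
      have h03 := hnegc ht
      by_cases h04 : 0 < t + (m : ℤ)
      · exfalso
        have h05 := hposc h04
        have e : (ζ : ℤ) * (-t) + (ζ : ℤ) * (t + m) = (ζ : ℤ) * m := by ring
        linarith
      · have h06 : (ζ : ℤ) * (-t) ≤ (ζ : ℤ) * m := by linarith
        have h07 : -t ≤ (m : ℤ) := le_of_mul_le_mul_left h06 (by omega)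
        have h08 : t = -(m : ℤ) := by omega
        have e' : (ζ : ℤ) * (-t) = (ζ : ℤ) * m := by rw [h08]; ring
        have h09 : (dpt S.M S.M₁ S.Nsub b : ℤ) ≤ 0 := by linarith
        have hBz : dpt S.M S.M₁ S.Nsub b = 0 := by omega
        have hbM1 : b ∈ S.M₁ := (S.dpt_zero_iff_mem_M1 hcar hbM).1 hBz
        refine Or.inr (Or.inr ?_)
        have e0 : -t - (m : ℤ) = 0 := by omega
        have hbinv : (a * S.Δ ^ t)⁻¹ = b := by
          rw [hainv, e0, zpow_zero, mul_one]
        have h9 : a * S.Δ ^ t = b⁻¹ := by rw [← hbinv, inv_inv]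
        rw [h9]
        exact S.G₁.inv_mem (S.M1_le_G1 _ hbM1)
    · -- t = 0
      subst ht
      have h04 : (0 : ℤ) < 0 + (m : ℤ) := by omega
      have h05 := hposc h04
      have e : (ζ : ℤ) * ((0 : ℤ) + m) = (ζ : ℤ) * m := by ring
      have h06 : (dpt S.M S.M₁ S.Nsub a : ℤ) ≤ 0 := by linarith
      have hAz : dpt S.M S.M₁ S.Nsub a = 0 := by omega
      have haM1 : a ∈ S.M₁ := (S.dpt_zero_iff_mem_M1 hcar haM).1 hAz
      exact Or.inr (Or.inr (by simpa using S.M1_le_G1 _ haM1))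
    · -- t > 0
      exfalso
      have h04 : (0 : ℤ) < t + (m : ℤ) := by omega
      have h05 := hposc h04
      have e1 : (ζ : ℤ) * (t + m) = (ζ : ℤ) * t + (ζ : ℤ) * m := by ring
      have e2 : (ζ : ℤ) * 1 ≤ (ζ : ℤ) * t := mul_le_mul_of_nonneg_left (by omega)
        (by positivity)
      linarith
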